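/- There exists a constant L > 0, depending only on n, |S|, |A|, r_max, and τ, such that for every player i, every state s, every action a_i ∈ A_i, and all policy profiles π, π' ∈ Π, |p_π(s) \bar{adv}^π_i(s,a_i) − p_{π'}(s) \bar{adv}^{π'}_i(s,a_i)| ≤ L ‖π − π'‖_∞; that is, each component of the individual payoff gradient v_i(π) is Lipschitz continuous in the policy profile. -/

import Mathlib

open Matrix BigOperators

noncomputable section

variable {n : ℕ} {S : Type} [Fintype S] [DecidableEq S]
  {A : Fin n → Type} [∀ i, Fintype (A i)] [∀ i, DecidableEq (A i)]

/-- A stationary policy profile: each player `i` assigns to each state a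
probability distribution on her action set `A i`. -/
def IsPolicyProfile (π : ∀ i : Fin n, S → A i → ℝ) : Prop :=
  (∀ i s a, 0 ≤ π i s a) ∧ (∀ i s, ∑ a, π i s a = 1)

/-- Transition probabilities `ℙ[s' | s, a]`. -/
def IsTransition (T : S → (∀ i, A i) → S → ℝ) : Prop :=
  (∀ s a s', 0 ≤ T s a s') ∧ (∀ s a, ∑ s', T s a s' = 1)

/-- A probability distribution on `S` (as a row vector). -/
def IsDist (w : S → ℝ) : Prop := (∀ s, 0 ≤ w s) ∧ ∑ s, w s = 1

/-- The transition matrix induced by a policy profile: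
`P_π(s'|s) = ∑_a ℙ[s'|s,a] ∏_j π_j(a_j|s)`. -/
def Pmat (T : S → (∀ i, A i) → S → ℝ) (π : ∀ i : Fin n, S → A i → ℝ) :
    Matrix S S ℝ :=
  fun s s' => ∑ a : ∀ i, A i, T s a s' * ∏ i, π i s (a i)

/-- Sup-norm distance between two policy profiles. -/
def polDist (π π' : ∀ i : Fin n, S → A i → ℝ) : ℝ :=
  ⨆ i, ⨆ s, ⨆ a, |π i s a - π' i s a|

/-- ℓ¹-norm on ℝ^S. -/
def l1 (w : S → ℝ) : ℝ := ∑ s, |w s|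

/-- The expected one-step reward vector `R_i^π`. -/
def Rvec (r : S → (∀ i, A i) → ℝ) (π : ∀ i : Fin n, S → A i → ℝ) : S → ℝ :=
  fun s => ∑ a : ∀ i, A i, (∏ j, π j s (a j)) * r s a

/-- The long-run average value `V_i(π) = ∑_s p_π(s) R_i^π(s)`, where `p` is the
stationary distribution of `P_π`. -/
def Vval (p : S → ℝ) (R : S → ℝ) : ℝ := ∑ s, p s * R s

/-- The uniform mixing assumption with mixing time `τ`. -/
def Mixing (T : S → (∀ i, A i) → S → ℝ) (τ : ℝ) : Prop :=
  ∀ π : ∀ i : Fin n, S → A i → ℝ, IsPolicyProfile π →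
    ∀ w w' : S → ℝ, IsDist w → IsDist w' →
      l1 ((w - w') ᵥ* Pmat T π) ≤ Real.exp (-(1 / τ)) * l1 (w - w')

/-- The advantage function
`adv^π_i(s,a) = r_i(s,a) − V_i(π) + ∑_{t≥1} ((e_s − p_π) P_π^t) R_i^π`. -/
def adv (T : S → (∀ i, A i) → S → ℝ) (r : S → (∀ i, A i) → ℝ)
    (π : ∀ i : Fin n, S → A i → ℝ) (p : S → ℝ) (s : S) (a : ∀ i, A i) : ℝ :=
  r s a - Vval p (Rvec r π)
    + ∑' t : ℕ, ((Pi.single s 1 - p) ᵥ* (Pmat T π ^ (t + 1))) ⬝ᵥ (Rvec r π)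

/-- The average advantage function
`\bar adv^π_i(s, a_i) = ∑_{a_{-i}} (∏_{j≠i} π_j(a_j|s)) adv^π_i(s,(a_i,a_{-i}))`. -/
def avgAdv (T : S → (∀ i, A i) → S → ℝ) (r : S → (∀ i, A i) → ℝ)
    (π : ∀ i : Fin n, S → A i → ℝ) (p : S → ℝ) (i : Fin n) (s : S) (ai : A i) : ℝ :=
  ∑ a : ∀ j, A j,
    if a i = ai then (∏ j ∈ Finset.univ.erase i, π j s (a j)) * adv T r π p s a
    else 0

set_option linter.unusedSectionVars false



lemma l1_nonneg (w : S → ℝ) : 0 ≤ l1 w := Finset.sum_nonneg fun _ _ => abs_nonneg _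

lemma abs_apply_le_l1 (w : S → ℝ) (s : S) : |w s| ≤ l1 w :=
  Finset.single_le_sum (fun t _ => abs_nonneg (w t)) (Finset.mem_univ s)

lemma l1_add_le (u v : S → ℝ) : l1 (u + v) ≤ l1 u + l1 v := by
  rw [l1, l1, l1, ← Finset.sum_add_distrib]
  exact Finset.sum_le_sum fun s _ => abs_add_le _ _

lemma l1_smul (c : ℝ) (w : S → ℝ) : l1 (c • w) = |c| * l1 w := by
  simp [l1, abs_mul, Finset.mul_sum]

lemma l1_dist (w : S → ℝ) (hw : IsDist w) : l1 w = 1 := by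
  rw [l1, ← hw.2]
  exact Finset.sum_congr rfl fun s _ => abs_of_nonneg (hw.1 s)

lemma abs_dot_le (x R : S → ℝ) (c : ℝ) (hR : ∀ s, |R s| ≤ c) : |x ⬝ᵥ R| ≤ l1 x * c := by
  rw [dotProduct, l1, Finset.sum_mul]
  refine (Finset.abs_sum_le_sum_abs _ _).trans (Finset.sum_le_sum fun s _ => ?_)
  rw [abs_mul]
  exact mul_le_mul_of_nonneg_left (hR s) (abs_nonneg _)

lemma vecMul_apply (x : S → ℝ) (M : Matrix S S ℝ) (s' : S) :
    (x ᵥ* M) s' = ∑ s, x s * M s s' := rfl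

lemma l1_vecMul_le (x : S → ℝ) (M : Matrix S S ℝ) (c : ℝ)
    (hM : ∀ s, ∑ s', |M s s'| ≤ c) : l1 (x ᵥ* M) ≤ l1 x * c := by
  rw [l1, l1, Finset.sum_mul]
  calc ∑ s', |(x ᵥ* M) s'| ≤ ∑ s', ∑ s, |x s| * |M s s'| := by
        refine Finset.sum_le_sum fun s' _ => ?_
        rw [_root_.vecMul_apply]
        refine (Finset.abs_sum_le_sum_abs _ _).trans (Finset.sum_le_sum fun s _ => ?_)
        rw [abs_mul]
    _ = ∑ s, |x s| * ∑ s', |M s s'| := by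
        rw [Finset.sum_comm]
        exact Finset.sum_congr rfl fun s _ => by rw [Finset.mul_sum]
    _ ≤ ∑ s, |x s| * c :=
        Finset.sum_le_sum fun s _ => mul_le_mul_of_nonneg_left (hM s) (abs_nonneg _)

def StochM (M : Matrix S S ℝ) : Prop := (∀ s s', 0 ≤ M s s') ∧ ∀ s, ∑ s', M s s' = 1

lemma stoch_mul {M N : Matrix S S ℝ} (hM : StochM M) (hN : StochM N) : StochM (M * N) := by
  constructor
  · intro s s'
    exact Finset.sum_nonneg fun u _ => mul_nonneg (hM.1 s u) (hN.1 u s')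
  · intro s
    simp only [Matrix.mul_apply]
    rw [Finset.sum_comm]
    rw [Finset.sum_congr rfl fun u _ => by rw [← Finset.mul_sum, hN.2 u, mul_one]]
    exact hM.2 s

lemma stoch_pow {M : Matrix S S ℝ} (hM : StochM M) (k : ℕ) : StochM (M ^ k) := by
  induction k with
  | zero =>
    rw [pow_zero]
    exact ⟨fun s s' => by simp [Matrix.one_apply]; positivity,
      fun s => by simp [Matrix.one_apply]⟩
  | succ k ih => rw [pow_succ]; exact stoch_mul ih hM

lemma sum_vecMul_stoch {M : Matrix S S ℝ} (hM : StochM M) (x : S → ℝ) :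
    ∑ s', (x ᵥ* M) s' = ∑ s, x s := by
  simp only [_root_.vecMul_apply]
  rw [Finset.sum_comm]
  refine Finset.sum_congr rfl fun s _ => ?_
  rw [← Finset.mul_sum, hM.2 s, mul_one]

lemma l1_vecMul_stoch_le {M : Matrix S S ℝ} (hM : StochM M) (x : S → ℝ) :
    l1 (x ᵥ* M) ≤ l1 x := by
  have := l1_vecMul_le x M 1 (fun s => by
    rw [Finset.sum_congr rfl fun s' _ => abs_of_nonneg (hM.1 s s'), hM.2 s])
  simpa using this

lemma dist_vecMul_stoch {M : Matrix S S ℝ} (hM : StochM M) {w : S → ℝ} (hw : IsDist w) :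
    IsDist (w ᵥ* M) := by
  constructor
  · intro s'
    rw [_root_.vecMul_apply]
    exact Finset.sum_nonneg fun s _ => mul_nonneg (hw.1 s) (hM.1 s s')
  · rw [sum_vecMul_stoch hM, hw.2]


-- products over policies
lemma prod_sum_one {π : ∀ i : Fin n, S → A i → ℝ} (hπ : IsPolicyProfile π) (s : S) :
    ∑ a : ∀ i, A i, ∏ i, π i s (a i) = 1 := by
  classical
  rw [← Fintype.piFinset_univ, ← Finset.prod_univ_sum]
  rw [Finset.prod_congr rfl fun i _ => hπ.2 i s]
  simp
lemma prod_nonneg_pol {π : ∀ i : Fin n, S → A i → ℝ} (hπ : IsPolicyProfile π) (s : S)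
    (a : ∀ i, A i) : 0 ≤ ∏ i, π i s (a i) :=
  Finset.prod_nonneg fun i _ => hπ.1 i s (a i)
lemma pol_le_one {π : ∀ i : Fin n, S → A i → ℝ} (hπ : IsPolicyProfile π) (i : Fin n)
    (s : S) (a : A i) : π i s a ≤ 1 := by
  rw [← hπ.2 i s]
  exact Finset.single_le_sum (fun b _ => hπ.1 i s b) (Finset.mem_univ a)
lemma prod_le_one_pol {π : ∀ i : Fin n, S → A i → ℝ} (hπ : IsPolicyProfile π) (s : S)
    (a : ∀ i, A i) : ∏ i, π i s (a i) ≤ 1 :=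
  Finset.prod_le_one (fun i _ => hπ.1 i s (a i)) (fun i _ => pol_le_one hπ i s (a i))

lemma abs_prod_sub_prod_le {ι : Type*} [DecidableEq ι] (t : Finset ι) (f g : ι → ℝ)
    (hf0 : ∀ j ∈ t, 0 ≤ f j) (hf1 : ∀ j ∈ t, f j ≤ 1)
    (hg0 : ∀ j ∈ t, 0 ≤ g j) (hg1 : ∀ j ∈ t, g j ≤ 1) :
    |∏ j ∈ t, f j - ∏ j ∈ t, g j| ≤ ∑ j ∈ t, |f j - g j| := by
  induction t using Finset.induction_on with
  | empty => simp
  | @insert a t ha ih =>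
    rw [Finset.prod_insert ha, Finset.prod_insert ha, Finset.sum_insert ha]
    have h1 : ∀ j ∈ t, 0 ≤ f j := fun j hj => hf0 j (Finset.mem_insert_of_mem hj)
    have h2 : ∀ j ∈ t, f j ≤ 1 := fun j hj => hf1 j (Finset.mem_insert_of_mem hj)
    have h3 : ∀ j ∈ t, 0 ≤ g j := fun j hj => hg0 j (Finset.mem_insert_of_mem hj)
    have h4 : ∀ j ∈ t, g j ≤ 1 := fun j hj => hg1 j (Finset.mem_insert_of_mem hj)
    have hfp0 : 0 ≤ ∏ j ∈ t, f j := Finset.prod_nonneg h1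
    have hfp1 : ∏ j ∈ t, f j ≤ 1 := Finset.prod_le_one h1 h2
    have hga : 0 ≤ g a := hg0 a (Finset.mem_insert_self a t)
    have hga1 : g a ≤ 1 := hg1 a (Finset.mem_insert_self a t)
    have key : f a * ∏ j ∈ t, f j - g a * ∏ j ∈ t, g j
        = (f a - g a) * ∏ j ∈ t, f j + g a * (∏ j ∈ t, f j - ∏ j ∈ t, g j) := by ring
    rw [key]
    calc |(f a - g a) * ∏ j ∈ t, f j + g a * (∏ j ∈ t, f j - ∏ j ∈ t, g j)|
        ≤ |(f a - g a) * ∏ j ∈ t, f j| + |g a * (∏ j ∈ t, f j - ∏ j ∈ t, g j)| := abs_add_le _ _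
      _ ≤ |f a - g a| * 1 + 1 * |∏ j ∈ t, f j - ∏ j ∈ t, g j| := by
          rw [abs_mul, abs_mul]
          gcongr
          · rw [abs_of_nonneg hfp0]; exact hfp1
          · rw [abs_of_nonneg hga]; exact hga1
      _ ≤ |f a - g a| + ∑ j ∈ t, |f j - g j| := by
          rw [mul_one, one_mul]
          exact add_le_add le_rfl (ih h1 h2 h3 h4)

lemma le_polDist (π π' : ∀ i : Fin n, S → A i → ℝ) (j : Fin n) (s : S) (a : A j) :
    |π j s a - π' j s a| ≤ polDist π π' := by
  have h1 : |π j s a - π' j s a| ≤ ⨆ b, |π j s b - π' j s b| :=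
    le_ciSup (f := fun b => |π j s b - π' j s b|) (Set.Finite.bddAbove (Set.finite_range _)) a
  have h2 : (⨆ b, |π j s b - π' j s b|) ≤ ⨆ t, ⨆ b, |π j t b - π' j t b| :=
    le_ciSup (f := fun t => ⨆ b, |π j t b - π' j t b|) (Set.Finite.bddAbove (Set.finite_range _)) s
  have h3 : (⨆ t, ⨆ b, |π j t b - π' j t b|) ≤ polDist π π' :=
    le_ciSup (f := fun j => ⨆ t, ⨆ b, |π j t b - π' j t b|) (Set.Finite.bddAbove (Set.finite_range _)) j
  exact h1.trans (h2.trans h3)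

lemma prod_diff_le {π π' : ∀ i : Fin n, S → A i → ℝ} (hπ : IsPolicyProfile π)
    (hπ' : IsPolicyProfile π') (s : S) (a : ∀ i, A i) :
    |∏ i, π i s (a i) - ∏ i, π' i s (a i)| ≤ n * polDist π π' := by
  calc |∏ i, π i s (a i) - ∏ i, π' i s (a i)| ≤ ∑ i, |π i s (a i) - π' i s (a i)| :=
        abs_prod_sub_prod_le _ _ _ (fun j _ => hπ.1 j s (a j)) (fun j _ => pol_le_one hπ j s (a j))
          (fun j _ => hπ'.1 j s (a j)) (fun j _ => pol_le_one hπ' j s (a j))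
    _ ≤ ∑ _i : Fin n, polDist π π' :=
        Finset.sum_le_sum fun j _ => le_polDist π π' j s (a j)
    _ = n * polDist π π' := by simp [mul_comm]

lemma stoch_Pmat {T : S → (∀ i, A i) → S → ℝ} (hT : IsTransition T)
    {π : ∀ i : Fin n, S → A i → ℝ} (hπ : IsPolicyProfile π) : StochM (Pmat T π) := by
  constructor
  · intro s s'
    exact Finset.sum_nonneg fun a _ => mul_nonneg (hT.1 s a s') (prod_nonneg_pol hπ s a)
  · intro s
    simp only [Pmat]
    rw [Finset.sum_comm]
    rw [Finset.sum_congr rfl fun a _ => by rw [← Finset.sum_mul, hT.2 s a, one_mul]]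
    exact prod_sum_one hπ s

lemma Pdiff_row {T : S → (∀ i, A i) → S → ℝ} (hT : IsTransition T)
    {π π' : ∀ i : Fin n, S → A i → ℝ} (hπ : IsPolicyProfile π) (hπ' : IsPolicyProfile π')
    (s : S) :
    ∑ s', |Pmat T π s s' - Pmat T π' s s'| ≤
      (Fintype.card (∀ i, A i) : ℝ) * (n * polDist π π') := by
  have hstep : ∀ s', |Pmat T π s s' - Pmat T π' s s'| ≤
      ∑ a : ∀ i, A i, T s a s' * |∏ i, π i s (a i) - ∏ i, π' i s (a i)| := by
    intro s'
    simp only [Pmat]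
    rw [← Finset.sum_sub_distrib]
    refine (Finset.abs_sum_le_sum_abs _ _).trans (Finset.sum_le_sum fun a _ => ?_)
    rw [← mul_sub, abs_mul, abs_of_nonneg (hT.1 s a s')]
  calc ∑ s', |Pmat T π s s' - Pmat T π' s s'|
      ≤ ∑ s', ∑ a : ∀ i, A i, T s a s' * |∏ i, π i s (a i) - ∏ i, π' i s (a i)| :=
        Finset.sum_le_sum fun s' _ => hstep s'
    _ = ∑ a : ∀ i, A i, |∏ i, π i s (a i) - ∏ i, π' i s (a i)| := by
        rw [Finset.sum_comm]
        exact Finset.sum_congr rfl fun a _ => by rw [← Finset.sum_mul, hT.2 s a, one_mul]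
    _ ≤ ∑ _a : ∀ i, A i, n * polDist π π' :=
        Finset.sum_le_sum fun a _ => prod_diff_le hπ hπ' s a
    _ = (Fintype.card (∀ i, A i) : ℝ) * (n * polDist π π') := by
        rw [Finset.sum_const, nsmul_eq_mul, Fintype.card]



-- mixing lemmas
lemma mix_zero {T : S → (∀ i, A i) → S → ℝ} {τ : ℝ} (hmix : Mixing T τ)
    {π : ∀ i : Fin n, S → A i → ℝ} (hπ : IsPolicyProfile π)
    (x : S → ℝ) (hx : ∑ s, x s = 0) :
    l1 (x ᵥ* Pmat T π) ≤ Real.exp (-(1 / τ)) * l1 x := by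
  classical
  set m : ℝ := ∑ s, max (x s) 0 with hm_def
  have hm0 : 0 ≤ m := Finset.sum_nonneg fun s _ => le_max_right _ _
  rcases eq_or_lt_of_le hm0 with hm | hm
  · -- m = 0 forces x = 0
    have hx0 : x = 0 := by
      have hall : ∀ s ∈ Finset.univ, max (x s) 0 = 0 :=
        (Finset.sum_eq_zero_iff_of_nonneg (fun s _ => le_max_right _ _)).mp hm.symm
      have hle : ∀ s, x s ≤ 0 := fun s => sup_eq_right.mp (hall s (Finset.mem_univ s))
      have hneg : ∀ s ∈ Finset.univ, (0:ℝ) ≤ -x s := fun s _ => neg_nonneg.mpr (hle s)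
      have hsum : ∑ s, -x s = 0 := by
        rw [Finset.sum_neg_distrib, hx, neg_zero]
      have := (Finset.sum_eq_zero_iff_of_nonneg hneg).mp hsum
      funext s
      have := this s (Finset.mem_univ s)
      simpa using neg_eq_zero.mp this
    rw [hx0]
    simp [l1, Matrix.zero_vecMul]
  · set u : S → ℝ := fun s => max (x s) 0 / m with hu_def
    set u' : S → ℝ := fun s => max (-x s) 0 / m with hu'_def
    have hmax : ∀ s, max (-x s) 0 = max (x s) 0 - x s := by
      intro s
      rcases le_or_gt (x s) 0 with h | h
      · rw [max_eq_left (by linarith), max_eq_right h]; ring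
      · rw [max_eq_right (by linarith), max_eq_left h.le]; ring
    have hu : IsDist u := by
      constructor
      · intro s; exact div_nonneg (le_max_right _ _) hm0
      · rw [hu_def, ← Finset.sum_div, ← hm_def, div_self hm.ne']
    have hu' : IsDist u' := by
      constructor
      · intro s; exact div_nonneg (le_max_right _ _) hm0
      · rw [hu'_def, ← Finset.sum_div]
        rw [Finset.sum_congr rfl fun s _ => hmax s, Finset.sum_sub_distrib, hx, sub_zero,
          ← hm_def, div_self hm.ne']
    have hdiff : u - u' = m⁻¹ • x := by
      funext s
      simp only [Pi.sub_apply, hu_def, hu'_def, Pi.smul_apply, smul_eq_mul, hmax s]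
      field_simp
      ring
    have hmx := hmix π hπ u u' hu hu'
    rw [hdiff] at hmx
    have h1 : (m⁻¹ • x) ᵥ* Pmat T π = m⁻¹ • (x ᵥ* Pmat T π) := by
      funext s'
      simp [_root_.vecMul_apply, Finset.mul_sum, mul_assoc]
    rw [h1, l1_smul, l1_smul, abs_of_nonneg (inv_nonneg.mpr hm0)] at hmx
    have hminv : 0 < m⁻¹ := inv_pos.mpr hm
    calc l1 (x ᵥ* Pmat T π) = m * (m⁻¹ * l1 (x ᵥ* Pmat T π)) := by
          rw [← mul_assoc, mul_inv_cancel₀ hm.ne', one_mul]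
      _ ≤ m * (Real.exp (-(1 / τ)) * (m⁻¹ * l1 x)) := mul_le_mul_of_nonneg_left hmx hm0
      _ = Real.exp (-(1 / τ)) * l1 x := by
          rw [show m * (Real.exp (-(1 / τ)) * (m⁻¹ * l1 x))
              = (m * m⁻¹) * (Real.exp (-(1 / τ)) * l1 x) by ring,
            mul_inv_cancel₀ hm.ne', one_mul]


lemma mix_pow {T : S → (∀ i, A i) → S → ℝ} {τ : ℝ} (hT : IsTransition T) (hmix : Mixing T τ)
    {π : ∀ i : Fin n, S → A i → ℝ} (hπ : IsPolicyProfile π)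
    (x : S → ℝ) (hx : ∑ s, x s = 0) (k : ℕ) :
    l1 (x ᵥ* (Pmat T π) ^ k) ≤ Real.exp (-(1 / τ)) ^ k * l1 x := by
  induction k with
  | zero => simp [Matrix.vecMul_one]
  | succ k ih =>
    rw [pow_succ, ← Matrix.vecMul_vecMul]
    have hsum : ∑ s', (x ᵥ* (Pmat T π) ^ k) s' = 0 := by
      rw [sum_vecMul_stoch (stoch_pow (stoch_Pmat hT hπ) k), hx]
    calc l1 ((x ᵥ* (Pmat T π) ^ k) ᵥ* Pmat T π)
        ≤ Real.exp (-(1 / τ)) * l1 (x ᵥ* (Pmat T π) ^ k) := mix_zero hmix hπ _ hsum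
      _ ≤ Real.exp (-(1 / τ)) * (Real.exp (-(1 / τ)) ^ k * l1 x) :=
          mul_le_mul_of_nonneg_left ih (Real.exp_pos _).le
      _ = Real.exp (-(1 / τ)) ^ (k + 1) * l1 x := by ring

lemma pow_diff_l1 {T : S → (∀ i, A i) → S → ℝ} {τ : ℝ} (hT : IsTransition T)
    (hmix : Mixing T τ) {π π' : ∀ i : Fin n, S → A i → ℝ}
    (hπ : IsPolicyProfile π) (hπ' : IsPolicyProfile π')
    (y : S → ℝ) (hy : ∑ s, y s = 0) (t : ℕ) :
    l1 (y ᵥ* ((Pmat T π) ^ (t + 1) - (Pmat T π') ^ (t + 1))) ≤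
      (t + 1) * Real.exp (-(1 / τ)) ^ t *
        ((Fintype.card (∀ i, A i) : ℝ) * (n * polDist π π')) * l1 y := by
  set q : ℝ := Real.exp (-(1 / τ)) with hq_def
  have hq0 : 0 < q := Real.exp_pos _
  set Kd : ℝ := (Fintype.card (∀ i, A i) : ℝ) * (n * polDist π π') with hKd_def
  have hdiff : ∀ z : S → ℝ, l1 (z ᵥ* (Pmat T π - Pmat T π')) ≤ l1 z * Kd := fun z =>
    l1_vecMul_le z _ Kd (fun s => Pdiff_row hT hπ hπ' s)
  have hpd0 : 0 ≤ polDist π π' :=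
    Real.iSup_nonneg fun j => Real.iSup_nonneg fun t => Real.iSup_nonneg fun b => abs_nonneg _
  have hKd0 : 0 ≤ Kd :=
    mul_nonneg (Nat.cast_nonneg _) (mul_nonneg (Nat.cast_nonneg _) hpd0)
  induction t generalizing y with
  | zero =>
    simpa using hdiff y |>.trans (by rw [mul_comm])
  | succ t ih =>
    have e1 : (Pmat T π) ^ (t + 2) = Pmat T π * (Pmat T π) ^ (t + 1) := pow_succ' _ _
    have e2 : (Pmat T π') ^ (t + 2) = Pmat T π' * (Pmat T π') ^ (t + 1) := pow_succ' _ _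
    have hid : (Pmat T π) ^ (t + 2) - (Pmat T π') ^ (t + 2)
        = (Pmat T π - Pmat T π') * (Pmat T π') ^ (t + 1)
          + Pmat T π * ((Pmat T π) ^ (t + 1) - (Pmat T π') ^ (t + 1)) := by
      rw [e1, e2, sub_mul, mul_sub]
      abel
    rw [hid, Matrix.vecMul_add, ← Matrix.vecMul_vecMul, ← Matrix.vecMul_vecMul]
    have hyP : ∑ s', (y ᵥ* Pmat T π) s' = 0 := by
      rw [sum_vecMul_stoch (stoch_Pmat hT hπ), hy]
    have hyD : ∑ s', (y ᵥ* (Pmat T π - Pmat T π')) s' = 0 := by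
      rw [Matrix.vecMul_sub]
      simp only [Pi.sub_apply]
      rw [Finset.sum_sub_distrib, sum_vecMul_stoch (stoch_Pmat hT hπ),
        sum_vecMul_stoch (stoch_Pmat hT hπ')]
      exact sub_self _
    have term1 : l1 ((y ᵥ* (Pmat T π - Pmat T π')) ᵥ* (Pmat T π') ^ (t + 1))
        ≤ q ^ (t + 1) * (Kd * l1 y) := by
      calc l1 ((y ᵥ* (Pmat T π - Pmat T π')) ᵥ* (Pmat T π') ^ (t + 1))
          ≤ q ^ (t + 1) * l1 (y ᵥ* (Pmat T π - Pmat T π')) := mix_pow hT hmix hπ' _ hyD _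
        _ ≤ q ^ (t + 1) * (l1 y * Kd) :=
            mul_le_mul_of_nonneg_left (hdiff y) (by positivity)
        _ = q ^ (t + 1) * (Kd * l1 y) := by ring
    have term2 : l1 ((y ᵥ* Pmat T π) ᵥ* ((Pmat T π) ^ (t + 1) - (Pmat T π') ^ (t + 1)))
        ≤ (t + 1) * q ^ t * Kd * (q * l1 y) := by
      calc l1 ((y ᵥ* Pmat T π) ᵥ* ((Pmat T π) ^ (t + 1) - (Pmat T π') ^ (t + 1)))
          ≤ (t + 1) * q ^ t * Kd * l1 (y ᵥ* Pmat T π) := ih _ hyP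
        _ ≤ (t + 1) * q ^ t * Kd * (q * l1 y) := by
            refine mul_le_mul_of_nonneg_left ?_ (by positivity)
            have h := mix_pow hT hmix hπ y hy 1
            rw [pow_one, pow_one] at h
            exact h
    calc l1 ((y ᵥ* (Pmat T π - Pmat T π')) ᵥ* (Pmat T π') ^ (t + 1)
          + (y ᵥ* Pmat T π) ᵥ* ((Pmat T π) ^ (t + 1) - (Pmat T π') ^ (t + 1)))
        ≤ l1 ((y ᵥ* (Pmat T π - Pmat T π')) ᵥ* (Pmat T π') ^ (t + 1))
          + l1 ((y ᵥ* Pmat T π) ᵥ* ((Pmat T π) ^ (t + 1) - (Pmat T π') ^ (t + 1))) :=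
          l1_add_le _ _
      _ ≤ q ^ (t + 1) * (Kd * l1 y) + (t + 1) * q ^ t * Kd * (q * l1 y) :=
          add_le_add term1 term2
      _ = (↑(t + 1) + 1) * q ^ (t + 1) * Kd * l1 y := by
          push_cast
          ring


lemma polDist_nonneg (π π' : ∀ i : Fin n, S → A i → ℝ) : 0 ≤ polDist π π' :=
  Real.iSup_nonneg fun _ => Real.iSup_nonneg fun _ => Real.iSup_nonneg fun _ => abs_nonneg _

lemma l1_sub_comm (u v : S → ℝ) : l1 (u - v) = l1 (v - u) := by
  simp [l1, abs_sub_comm]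

lemma l1_neg (v : S → ℝ) : l1 (-v) = l1 v := by simp [l1]

lemma l1_sub_le (u v : S → ℝ) : l1 (u - v) ≤ l1 u + l1 v := by
  rw [sub_eq_add_neg, ← l1_neg v]
  exact l1_add_le u (-v)

lemma single_dist (s : S) : IsDist (Pi.single s (1:ℝ)) := by
  constructor
  · intro t
    rcases eq_or_ne t s with h | h <;> simp [h, Pi.single_apply]
  · simp [Pi.single_apply]

lemma Rvec_bounds {r : S → (∀ i, A i) → ℝ} {rmax : ℝ}
    (hr : ∀ s a, r s a ∈ Set.Icc (0:ℝ) rmax) {π : ∀ i : Fin n, S → A i → ℝ}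
    (hπ : IsPolicyProfile π) (s : S) : Rvec r π s ∈ Set.Icc (0:ℝ) rmax := by
  constructor
  · exact Finset.sum_nonneg fun a _ =>
      mul_nonneg (prod_nonneg_pol hπ s a) (hr s a).1
  · calc Rvec r π s ≤ ∑ a : ∀ i, A i, (∏ j, π j s (a j)) * rmax :=
        Finset.sum_le_sum fun a _ =>
          mul_le_mul_of_nonneg_left (hr s a).2 (prod_nonneg_pol hπ s a)
    _ = rmax := by rw [← Finset.sum_mul, prod_sum_one hπ s, one_mul]

lemma Rvec_diff {r : S → (∀ i, A i) → ℝ} {rmax : ℝ} (hrmax : 0 ≤ rmax)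
    (hr : ∀ s a, r s a ∈ Set.Icc (0:ℝ) rmax) {π π' : ∀ i : Fin n, S → A i → ℝ}
    (hπ : IsPolicyProfile π) (hπ' : IsPolicyProfile π') (s : S) :
    |Rvec r π s - Rvec r π' s| ≤
      (Fintype.card (∀ i, A i) : ℝ) * (n * polDist π π') * rmax := by
  rw [Rvec, Rvec, ← Finset.sum_sub_distrib]
  calc |∑ a : ∀ i, A i, ((∏ j, π j s (a j)) * r s a - (∏ j, π' j s (a j)) * r s a)|
      ≤ ∑ a : ∀ i, A i, |(∏ j, π j s (a j)) - (∏ j, π' j s (a j))| * rmax := by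
        refine (Finset.abs_sum_le_sum_abs _ _).trans (Finset.sum_le_sum fun a _ => ?_)
        rw [← sub_mul, abs_mul]
        refine mul_le_mul_of_nonneg_left ?_ (abs_nonneg _)
        rw [abs_of_nonneg (hr s a).1]
        exact (hr s a).2
    _ ≤ ∑ _a : ∀ i, A i, (n * polDist π π') * rmax :=
        Finset.sum_le_sum fun a _ =>
          mul_le_mul_of_nonneg_right (prod_diff_le hπ hπ' s a) hrmax
    _ = (Fintype.card (∀ i, A i) : ℝ) * (n * polDist π π') * rmax := by
        rw [Finset.sum_const, nsmul_eq_mul, Finset.card_univ]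
        ring

lemma tail_term_bound {T : S → (∀ i, A i) → S → ℝ} {τ : ℝ} (hT : IsTransition T)
    (hmix : Mixing T τ) {π : ∀ i : Fin n, S → A i → ℝ} (hπ : IsPolicyProfile π)
    {p : S → ℝ} (hp : IsDist p) {r : S → (∀ i, A i) → ℝ} {rmax : ℝ}
    (hrmax : 0 ≤ rmax) (hr : ∀ s a, r s a ∈ Set.Icc (0:ℝ) rmax) (s : S) (t : ℕ) :
    |(((Pi.single s 1 : S → ℝ) - p) ᵥ* (Pmat T π ^ (t + 1))) ⬝ᵥ Rvec r π| ≤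
      2 * rmax * Real.exp (-(1 / τ)) ^ (t + 1) := by
  have hx : ∑ u, ((Pi.single s 1 : S → ℝ) - p) u = 0 := by
    simp only [Pi.sub_apply]
    rw [Finset.sum_sub_distrib, (single_dist s).2, hp.2, sub_self]
  have hl1x : l1 ((Pi.single s 1 : S → ℝ) - p) ≤ 2 := by
    refine (l1_sub_le _ _).trans ?_
    rw [l1_dist _ (single_dist s), l1_dist _ hp]
    norm_num
  have hR : ∀ u, |Rvec r π u| ≤ rmax := fun u => by
    rw [abs_of_nonneg (Rvec_bounds hr hπ u).1]
    exact (Rvec_bounds hr hπ u).2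
  calc |(((Pi.single s 1 : S → ℝ) - p) ᵥ* (Pmat T π ^ (t + 1))) ⬝ᵥ Rvec r π|
      ≤ l1 (((Pi.single s 1 : S → ℝ) - p) ᵥ* (Pmat T π ^ (t + 1))) * rmax := abs_dot_le _ _ _ hR
    _ ≤ (Real.exp (-(1 / τ)) ^ (t + 1) * l1 ((Pi.single s 1 : S → ℝ) - p)) * rmax :=
        mul_le_mul_of_nonneg_right (mix_pow hT hmix hπ _ hx _) hrmax
    _ ≤ 2 * rmax * Real.exp (-(1 / τ)) ^ (t + 1) := by
        have hq := pow_nonneg (Real.exp_pos (-(1/τ))).le (t+1)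
        nlinarith [l1_nonneg ((Pi.single s 1 : S → ℝ) - p), hl1x, hrmax, hq,
          mul_nonneg hq hrmax]


lemma polDist_comm (π π' : ∀ i : Fin n, S → A i → ℝ) : polDist π π' = polDist π' π := by
  simp [polDist, abs_sub_comm]


set_option maxHeartbeats 3000000 in
/-- Lipschitz continuity of the components of the individual payoff gradient
`v_i(π)(s,a_i) = p_π(s) \bar adv^π_i(s,a_i)`, with a constant depending only on
`n`, `S`, `A`, `r_max` and `τ`. -/
theorem payoff_gradient_lipschitz
    (rmax τ : ℝ) (hrmax : 0 ≤ rmax) (hτ : 0 < τ) :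
    ∃ L > (0 : ℝ),
      ∀ T : S → (∀ i, A i) → S → ℝ, IsTransition T → Mixing T τ →
      ∀ r : Fin n → S → (∀ i, A i) → ℝ, (∀ i s a, r i s a ∈ Set.Icc (0 : ℝ) rmax) →
      ∀ π π' : ∀ i : Fin n, S → A i → ℝ, IsPolicyProfile π → IsPolicyProfile π' →
      ∀ p p' : S → ℝ, IsDist p → p ᵥ* Pmat T π = p →
        IsDist p' → p' ᵥ* Pmat T π' = p' →
      ∀ (i : Fin n) (s : S) (ai : A i),
        |p s * avgAdv T (r i) π p i s ai - p' s * avgAdv T (r i) π' p' i s ai| ≤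
          L * polDist π π' := by
  classical
  obtain ⟨q, hq_def⟩ : ∃ q : ℝ, q = Real.exp (-(1 / τ)) := ⟨_, rfl⟩
  have hq0 : 0 < q := hq_def ▸ Real.exp_pos _
  have hq1 : q < 1 := by
    rw [hq_def]
    exact Real.exp_lt_one_iff.mpr (by rw [neg_lt_zero]; positivity)
  obtain ⟨β, hβ_def⟩ : ∃ b : ℝ, b = (1 - q)⁻¹ := ⟨_, rfl⟩
  have hβ0 : 0 < β := hβ_def ▸ inv_pos.mpr (by linarith)
  have hβq : (1 - q) * β = 1 := by
    rw [hβ_def, mul_inv_cancel₀ (by linarith : (1:ℝ) - q ≠ 0)]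
  obtain ⟨cA, hcA_def⟩ : ∃ c : ℝ, c = (Fintype.card (∀ i, A i) : ℝ) := ⟨_, rfl⟩
  have hcA0 : 0 ≤ cA := hcA_def ▸ Nat.cast_nonneg _
  obtain ⟨K, hK_def⟩ : ∃ k : ℝ, k = cA * n := ⟨_, rfl⟩
  have hK0 : 0 ≤ K := hK_def ▸ mul_nonneg hcA0 (Nat.cast_nonneg _)
  obtain ⟨Madv, hMadv_def⟩ : ∃ m : ℝ, m = rmax + 2 * rmax * β := ⟨_, rfl⟩
  have hMadv0 : 0 ≤ Madv := by
    rw [hMadv_def]; nlinarith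
  obtain ⟨CV, hCV_def⟩ : ∃ c : ℝ, c = (K * β + K) * rmax := ⟨_, rfl⟩
  have hCV0 : 0 ≤ CV := by
    rw [hCV_def]
    exact mul_nonneg (by nlinarith) hrmax
  obtain ⟨Ctail, hCtail_def⟩ : ∃ c : ℝ, c = K * rmax * (β + 4) * β ^ 2 := ⟨_, rfl⟩
  have hCtail0 : 0 ≤ Ctail := by
    rw [hCtail_def]
    have : (0:ℝ) ≤ β ^ 2 := sq_nonneg β
    nlinarith [mul_nonneg hK0 hrmax]
  obtain ⟨Cadv, hCadv_def⟩ : ∃ c : ℝ, c = CV + Ctail := ⟨_, rfl⟩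
  have hCadv0 : 0 ≤ Cadv := by rw [hCadv_def]; linarith
  obtain ⟨Cavg, hCavg_def⟩ : ∃ c : ℝ, c = cA * (n * Madv + Cadv) := ⟨_, rfl⟩
  have hCavg0 : 0 ≤ Cavg := by
    rw [hCavg_def]
    exact mul_nonneg hcA0 (add_nonneg (mul_nonneg (Nat.cast_nonneg _) hMadv0) hCadv0)
  refine ⟨K * β * cA * Madv + Cavg + 1, by nlinarith [mul_nonneg (mul_nonneg (mul_nonneg hK0 hβ0.le) hcA0) hMadv0], ?_⟩
  intro T hT hmix r hri π π' hπ hπ' p p' hp hpstat hp' hp'stat i s ai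
  set d := polDist π π' with hd_def
  have hd0 : 0 ≤ d := hd_def ▸ polDist_nonneg π π'
  have hKd_eq : (Fintype.card (∀ i, A i) : ℝ) * (↑n * polDist π π') = K * d := by
    rw [hK_def, hcA_def, ← hd_def]; ring
  -- P difference operator bound
  have hPd : ∀ z : S → ℝ, l1 (z ᵥ* (Pmat T π' - Pmat T π)) ≤ l1 z * (K * d) := by
    intro z
    have h := l1_vecMul_le z (Pmat T π' - Pmat T π) _ (fun u => Pdiff_row hT hπ' hπ u)
    rw [polDist_comm π' π, hKd_eq] at h
    exact h
  -- stationary distribution distance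
  have hst : l1 (p' - p) ≤ K * β * d := by
    have hmixpp : l1 ((p' - p) ᵥ* Pmat T π') ≤ q * l1 (p' - p) := by
      have h := hmix π' hπ' p' p hp' hp
      rw [← hq_def] at h
      exact h
    have hidp : p' - p = (p' - p) ᵥ* Pmat T π' + p ᵥ* (Pmat T π' - Pmat T π) := by
      rw [Matrix.sub_vecMul, Matrix.vecMul_sub, hp'stat, hpstat]
      abel
    have h1 : l1 (p ᵥ* (Pmat T π' - Pmat T π)) ≤ K * d := by
      have := hPd p
      rw [l1_dist p hp, one_mul] at this
      exact this
    have h2 : l1 (p' - p) ≤ q * l1 (p' - p) + K * d := by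
      calc l1 (p' - p) = l1 ((p' - p) ᵥ* Pmat T π' + p ᵥ* (Pmat T π' - Pmat T π)) := by
            rw [← hidp]
        _ ≤ l1 ((p' - p) ᵥ* Pmat T π') + l1 (p ᵥ* (Pmat T π' - Pmat T π)) := l1_add_le _ _
        _ ≤ q * l1 (p' - p) + K * d := add_le_add hmixpp h1
    have h3 : l1 (p' - p) * (1 - q) ≤ K * d := by nlinarith
    have h4 := mul_le_mul_of_nonneg_right h3 hβ0.le
    rw [mul_assoc, hβq, mul_one] at h4
    linarith
  -- reward vector difference
  have hRd : ∀ u, |Rvec (r i) π u - Rvec (r i) π' u| ≤ K * d * rmax := by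
    intro u
    have h := Rvec_diff hrmax (hri i) hπ hπ' u
    rw [hKd_eq] at h
    exact h
  have hRb : ∀ u, |Rvec (r i) π u| ≤ rmax := fun u => by
    rw [abs_of_nonneg (Rvec_bounds (hri i) hπ u).1]
    exact (Rvec_bounds (hri i) hπ u).2
  -- value difference
  have hVd : |Vval p (Rvec (r i) π) - Vval p' (Rvec (r i) π')| ≤ CV * d := by
    have e : Vval p (Rvec (r i) π) - Vval p' (Rvec (r i) π')
        = (p - p') ⬝ᵥ Rvec (r i) π + p' ⬝ᵥ (Rvec (r i) π - Rvec (r i) π') := by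
      rw [sub_dotProduct, dotProduct_sub]
      show Vval p (Rvec (r i) π) - Vval p' (Rvec (r i) π')
        = (p ⬝ᵥ Rvec (r i) π - p' ⬝ᵥ Rvec (r i) π)
          + (p' ⬝ᵥ Rvec (r i) π - p' ⬝ᵥ Rvec (r i) π')
      simp only [Vval, dotProduct]
      ring
    have hA : |(p - p') ⬝ᵥ Rvec (r i) π| ≤ (K * β * d) * rmax := by
      refine (abs_dot_le _ _ _ hRb).trans ?_
      rw [l1_sub_comm]
      exact mul_le_mul_of_nonneg_right hst hrmax
    have hB : |p' ⬝ᵥ (Rvec (r i) π - Rvec (r i) π')| ≤ K * d * rmax := by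
      have h := abs_dot_le p' (Rvec (r i) π - Rvec (r i) π') (K * d * rmax)
        (fun u => by simpa using hRd u)
      rw [l1_dist p' hp', one_mul] at h
      exact h
    rw [e]
    calc |(p - p') ⬝ᵥ Rvec (r i) π + p' ⬝ᵥ (Rvec (r i) π - Rvec (r i) π')|
        ≤ |(p - p') ⬝ᵥ Rvec (r i) π| + |p' ⬝ᵥ (Rvec (r i) π - Rvec (r i) π')| := abs_add_le _ _
      _ ≤ (K * β * d) * rmax + K * d * rmax := add_le_add hA hB
      _ = CV * d := by rw [hCV_def]; ring
  -- Vval bounds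
  have hV0 : 0 ≤ Vval p (Rvec (r i) π) :=
    Finset.sum_nonneg fun u _ => mul_nonneg (hp.1 u) (Rvec_bounds (hri i) hπ u).1
  have hV1 : Vval p (Rvec (r i) π) ≤ rmax := by
    calc Vval p (Rvec (r i) π) ≤ ∑ u, p u * rmax :=
          Finset.sum_le_sum fun u _ =>
            mul_le_mul_of_nonneg_left (Rvec_bounds (hri i) hπ u).2 (hp.1 u)
      _ = rmax := by rw [← Finset.sum_mul, hp.2, one_mul]
  -- tail sums
  set f : ℕ → ℝ := fun t =>
    ((Pi.single s 1 : S → ℝ) - p) ᵥ* (Pmat T π ^ (t + 1)) ⬝ᵥ Rvec (r i) π with hf_def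
  set g : ℕ → ℝ := fun t =>
    ((Pi.single s 1 : S → ℝ) - p') ᵥ* (Pmat T π' ^ (t + 1)) ⬝ᵥ Rvec (r i) π' with hg_def
  have hf : ∀ t, |f t| ≤ 2 * rmax * q ^ (t + 1) := fun t => by
    rw [hq_def]
    exact tail_term_bound hT hmix hπ hp hrmax (hri i) s t
  have hg : ∀ t, |g t| ≤ 2 * rmax * q ^ (t + 1) := fun t => by
    rw [hq_def]
    exact tail_term_bound hT hmix hπ' hp' hrmax (hri i) s t
  have hgeo : Summable (fun t : ℕ => q ^ t) := summable_geometric_of_lt_one hq0.le hq1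
  have hbd : ∀ t : ℕ, 2 * rmax * q ^ (t + 1) = (2 * rmax * q) * q ^ t := fun t => by
    rw [pow_succ]; ring
  have hfS : Summable f := by
    refine Summable.of_norm_bounded (hgeo.mul_left (2 * rmax * q)) ?_
    intro t
    rw [Real.norm_eq_abs]
    exact le_of_le_of_eq (hf t) (hbd t)
  have hgS : Summable g := by
    refine Summable.of_norm_bounded (hgeo.mul_left (2 * rmax * q)) ?_
    intro t
    rw [Real.norm_eq_abs]
    exact le_of_le_of_eq (hg t) (hbd t)
  have hgeoS : HasSum (fun t : ℕ => q ^ t) β := by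
    rw [hβ_def]
    exact hasSum_geometric_of_lt_one hq0.le hq1
  have htail_b : |∑' t, f t| ≤ 2 * rmax * β := by
    have h := tsum_of_norm_bounded (hgeoS.mul_left (2 * rmax * q))
      (fun t => by rw [Real.norm_eq_abs]; exact le_of_le_of_eq (hf t) (hbd t))
    rw [Real.norm_eq_abs] at h
    nlinarith
  -- zero-sum vectors
  have hx' : ∑ u, ((Pi.single s 1 : S → ℝ) - p') u = 0 := by
    simp only [Pi.sub_apply]
    rw [Finset.sum_sub_distrib, (single_dist s).2, hp'.2, sub_self]
  have hl1x' : l1 ((Pi.single s 1 : S → ℝ) - p') ≤ 2 := by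
    refine (l1_sub_le _ _).trans ?_
    rw [l1_dist _ (single_dist s), l1_dist _ hp']
    norm_num
  have hppsum : ∑ u, (p' - p) u = 0 := by
    simp only [Pi.sub_apply]
    rw [Finset.sum_sub_distrib, hp'.2, hp.2, sub_self]
  -- tail term difference
  have hΔt : ∀ t, |f t - g t| ≤ (K * d * rmax * (β + 4)) * ((↑t + 1) * q ^ t) := by
    intro t
    have hxx' : ((Pi.single s 1 : S → ℝ) - p) - ((Pi.single s 1 : S → ℝ) - p') = p' - p := by
      funext u
      simp only [Pi.sub_apply]
      ring
    have hdec : f t - g t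
        = ((p' - p) ᵥ* (Pmat T π ^ (t + 1))) ⬝ᵥ Rvec (r i) π
          + (((Pi.single s 1 : S → ℝ) - p') ᵥ* (Pmat T π ^ (t + 1) - Pmat T π' ^ (t + 1)))
              ⬝ᵥ Rvec (r i) π
          + (((Pi.single s 1 : S → ℝ) - p') ᵥ* (Pmat T π' ^ (t + 1)))
              ⬝ᵥ (Rvec (r i) π - Rvec (r i) π') := by
      rw [← hxx', Matrix.sub_vecMul, Matrix.vecMul_sub, sub_dotProduct,
        sub_dotProduct, dotProduct_sub, hf_def, hg_def]
      simp only []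
      ring
    have hA : |((p' - p) ᵥ* (Pmat T π ^ (t + 1))) ⬝ᵥ Rvec (r i) π|
        ≤ q ^ (t + 1) * (K * β * d) * rmax := by
      refine (abs_dot_le _ _ _ hRb).trans ?_
      have h := mix_pow hT hmix hπ (p' - p) hppsum (t + 1)
      rw [← hq_def] at h
      have h2 : l1 ((p' - p) ᵥ* Pmat T π ^ (t + 1)) ≤ q ^ (t + 1) * (K * β * d) :=
        h.trans (mul_le_mul_of_nonneg_left hst (pow_nonneg hq0.le _))
      exact mul_le_mul_of_nonneg_right h2 hrmax |>.trans (le_of_eq rfl)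
    have hB : |(((Pi.single s 1 : S → ℝ) - p') ᵥ* (Pmat T π ^ (t + 1) - Pmat T π' ^ (t + 1)))
        ⬝ᵥ Rvec (r i) π| ≤ ((↑t + 1) * q ^ t * (K * d) * 2) * rmax := by
      refine (abs_dot_le _ _ _ hRb).trans ?_
      have h := pow_diff_l1 hT hmix hπ hπ' _ hx' t
      rw [← hq_def, hKd_eq] at h
      have h2 : l1 (((Pi.single s 1 : S → ℝ) - p') ᵥ* (Pmat T π ^ (t + 1) - Pmat T π' ^ (t + 1)))
          ≤ (↑t + 1) * q ^ t * (K * d) * 2 := by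
        refine h.trans ?_
        have : (0:ℝ) ≤ (↑t + 1) * q ^ t * (K * d) := by positivity
        nlinarith
      exact mul_le_mul_of_nonneg_right h2 hrmax
    have hC : |(((Pi.single s 1 : S → ℝ) - p') ᵥ* (Pmat T π' ^ (t + 1)))
        ⬝ᵥ (Rvec (r i) π - Rvec (r i) π')| ≤ (q ^ (t + 1) * 2) * (K * d * rmax) := by
      have h := abs_dot_le (((Pi.single s 1 : S → ℝ) - p') ᵥ* (Pmat T π' ^ (t + 1)))
        (Rvec (r i) π - Rvec (r i) π') (K * d * rmax)
        (fun u => by simpa using hRd u)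
      refine h.trans ?_
      refine mul_le_mul_of_nonneg_right ?_ (by positivity)
      have h2 := mix_pow hT hmix hπ' _ hx' (t + 1)
      rw [← hq_def] at h2
      refine h2.trans ?_
      exact mul_le_mul_of_nonneg_left hl1x' (pow_nonneg hq0.le _)
    have habs : |f t - g t| ≤ q ^ (t + 1) * (K * β * d) * rmax
        + ((↑t + 1) * q ^ t * (K * d) * 2) * rmax + (q ^ (t + 1) * 2) * (K * d * rmax) := by
      rw [hdec]
      refine (abs_add_le _ _).trans ?_
      refine add_le_add ((abs_add_le _ _).trans (add_le_add hA hB)) hC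
    refine habs.trans ?_
    have e1 : q ^ (t + 1) ≤ q ^ t := by
      rw [pow_succ]
      nlinarith [pow_nonneg hq0.le t]
    have e2 : q ^ t ≤ (↑t + 1) * q ^ t := by
      nlinarith [pow_nonneg hq0.le t, Nat.cast_nonneg (α := ℝ) t]
    have e3 : (0:ℝ) ≤ K * d := mul_nonneg hK0 hd0
    have e4 : (0:ℝ) ≤ q ^ t := pow_nonneg hq0.le t
    have e5 : (0:ℝ) ≤ (↑t + 1) * q ^ t := le_trans e4 e2
    nlinarith [mul_nonneg (mul_nonneg e3 hrmax) hβ0.le,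
      mul_le_mul_of_nonneg_right (e1.trans e2) (mul_nonneg (mul_nonneg e3 hrmax) hβ0.le),
      mul_le_mul_of_nonneg_right (e1.trans e2) (mul_nonneg (mul_nonneg e3 hrmax) (by norm_num : (0:ℝ) ≤ 2)),
      mul_nonneg (mul_nonneg e3 hrmax) e5]
  -- sum of (t+1) q^t
  have hu : HasSum (fun t : ℕ => ((t : ℝ) + 1) * q ^ t) (β ^ 2) := by
    have h1 : HasSum (fun t : ℕ => (t : ℝ) * q ^ t) (q / (1 - q) ^ 2) :=
      hasSum_coe_mul_geometric_of_norm_lt_one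
        (by rw [Real.norm_eq_abs, abs_of_pos hq0]; exact hq1)
    have h3 := h1.add hgeoS
    have hfun : (fun t : ℕ => ((t : ℝ) + 1) * q ^ t)
        = fun t : ℕ => (t : ℝ) * q ^ t + q ^ t := by
      funext t; ring
    have hval : q / (1 - q) ^ 2 + β = β ^ 2 := by
      rw [hβ_def]
      have : (1:ℝ) - q ≠ 0 := by linarith
      field_simp
      ring
    rw [hfun, ← hval]
    exact h3
  have hΔtail : |(∑' t, f t) - ∑' t, g t| ≤ Ctail * d := by
    rw [← Summable.tsum_sub hfS hgS]
    have h := tsum_of_norm_bounded (hu.mul_left (K * d * rmax * (β + 4)))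
      (fun t => by rw [Real.norm_eq_abs]; exact hΔt t)
    rw [Real.norm_eq_abs] at h
    refine h.trans (le_of_eq ?_)
    rw [hCtail_def]
    ring
  -- advantage bounds
  have hΔadv : ∀ a : ∀ j, A j,
      |adv T (r i) π p s a - adv T (r i) π' p' s a| ≤ Cadv * d := by
    intro a
    have e : adv T (r i) π p s a - adv T (r i) π' p' s a
        = (Vval p' (Rvec (r i) π') - Vval p (Rvec (r i) π)) + ((∑' t, f t) - ∑' t, g t) := by
      rw [adv, adv, hf_def, hg_def]
      ring
    rw [e]
    calc |(Vval p' (Rvec (r i) π') - Vval p (Rvec (r i) π)) + ((∑' t, f t) - ∑' t, g t)|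
        ≤ |Vval p' (Rvec (r i) π') - Vval p (Rvec (r i) π)| + |(∑' t, f t) - ∑' t, g t| :=
          abs_add_le _ _
      _ ≤ CV * d + Ctail * d := by
          refine add_le_add ?_ hΔtail
          rw [abs_sub_comm]
          exact hVd
      _ = Cadv * d := by rw [hCadv_def]; ring
  have hadvb : ∀ a : ∀ j, A j, |adv T (r i) π p s a| ≤ Madv := by
    intro a
    have e : adv T (r i) π p s a = r i s a - Vval p (Rvec (r i) π) + ∑' t, f t := by
      simp only [adv, hf_def]
    rw [e]
    calc |r i s a - Vval p (Rvec (r i) π) + ∑' t, f t|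
        ≤ |r i s a - Vval p (Rvec (r i) π)| + |∑' t, f t| := abs_add_le _ _
      _ ≤ rmax + 2 * rmax * β := by
          refine add_le_add ?_ htail_b
          rw [abs_le]
          constructor
          · have := (hri i s a).1
            linarith
          · have := (hri i s a).2
            linarith
      _ = Madv := hMadv_def.symm
  -- average advantage bounds
  have havgb : |avgAdv T (r i) π p i s ai| ≤ cA * Madv := by
    rw [avgAdv]
    calc |∑ a : ∀ j, A j, if a i = ai
          then (∏ j ∈ Finset.univ.erase i, π j s (a j)) * adv T (r i) π p s a else 0|
        ≤ ∑ a : ∀ j, A j, |if a i = ai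
          then (∏ j ∈ Finset.univ.erase i, π j s (a j)) * adv T (r i) π p s a else 0| :=
          Finset.abs_sum_le_sum_abs _ _
      _ ≤ ∑ _a : ∀ j, A j, Madv := by
          refine Finset.sum_le_sum fun a _ => ?_
          by_cases h : a i = ai
          · simp only [h, if_true]
            rw [abs_mul]
            have h1 : |∏ j ∈ Finset.univ.erase i, π j s (a j)| ≤ 1 := by
              rw [abs_of_nonneg (Finset.prod_nonneg fun j _ => hπ.1 j s (a j))]
              exact Finset.prod_le_one (fun j _ => hπ.1 j s (a j))
                (fun j _ => pol_le_one hπ j s (a j))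
            nlinarith [abs_nonneg (adv T (r i) π p s a), hadvb a,
              abs_nonneg (∏ j ∈ Finset.univ.erase i, π j s (a j))]
          · simp only [h, if_false, abs_zero]
            exact hMadv0
      _ = cA * Madv := by
          rw [Finset.sum_const, nsmul_eq_mul, Finset.card_univ, hcA_def]
  have hΔavg : |avgAdv T (r i) π p i s ai - avgAdv T (r i) π' p' i s ai| ≤ Cavg * d := by
    rw [avgAdv, avgAdv, ← Finset.sum_sub_distrib]
    have hterm : ∀ a : ∀ j, A j,
        |(if a i = ai then (∏ j ∈ Finset.univ.erase i, π j s (a j)) * adv T (r i) π p s a else 0)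
          - (if a i = ai then (∏ j ∈ Finset.univ.erase i, π' j s (a j)) * adv T (r i) π' p' s a
            else 0)| ≤ (↑n * Madv + Cadv) * d := by
      intro a
      by_cases h : a i = ai
      · simp only [h, if_true]
        have hprodd : |(∏ j ∈ Finset.univ.erase i, π j s (a j))
            - ∏ j ∈ Finset.univ.erase i, π' j s (a j)| ≤ ↑n * d := by
          refine (abs_prod_sub_prod_le _ _ _ (fun j _ => hπ.1 j s (a j))
            (fun j _ => pol_le_one hπ j s (a j)) (fun j _ => hπ'.1 j s (a j))
            (fun j _ => pol_le_one hπ' j s (a j))).trans ?_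
          calc ∑ j ∈ Finset.univ.erase i, |π j s (a j) - π' j s (a j)|
              ≤ ∑ _j ∈ Finset.univ.erase i, d :=
                Finset.sum_le_sum fun j _ => le_polDist π π' j s (a j)
            _ = ((Finset.univ.erase i).card : ℝ) * d := by
                rw [Finset.sum_const, nsmul_eq_mul]
            _ ≤ ↑n * d := by
                refine mul_le_mul_of_nonneg_right ?_ hd0
                have : (Finset.univ.erase i).card ≤ Finset.univ.card :=
                  Finset.card_le_card (Finset.erase_subset _ _)
                have h2 : (Finset.univ : Finset (Fin n)).card = n := by
                  rw [Finset.card_univ, Fintype.card_fin]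
                exact_mod_cast this.trans h2.le
        have hprod1 : |∏ j ∈ Finset.univ.erase i, π' j s (a j)| ≤ 1 := by
          rw [abs_of_nonneg (Finset.prod_nonneg fun j _ => hπ'.1 j s (a j))]
          exact Finset.prod_le_one (fun j _ => hπ'.1 j s (a j))
            (fun j _ => pol_le_one hπ' j s (a j))
        have e : (∏ j ∈ Finset.univ.erase i, π j s (a j)) * adv T (r i) π p s a
            - (∏ j ∈ Finset.univ.erase i, π' j s (a j)) * adv T (r i) π' p' s a
            = ((∏ j ∈ Finset.univ.erase i, π j s (a j))
                - ∏ j ∈ Finset.univ.erase i, π' j s (a j)) * adv T (r i) π p s a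
              + (∏ j ∈ Finset.univ.erase i, π' j s (a j))
                * (adv T (r i) π p s a - adv T (r i) π' p' s a) := by
          ring
        rw [e]
        calc |((∏ j ∈ Finset.univ.erase i, π j s (a j))
                - ∏ j ∈ Finset.univ.erase i, π' j s (a j)) * adv T (r i) π p s a
              + (∏ j ∈ Finset.univ.erase i, π' j s (a j))
                * (adv T (r i) π p s a - adv T (r i) π' p' s a)|
            ≤ |(∏ j ∈ Finset.univ.erase i, π j s (a j))
                - ∏ j ∈ Finset.univ.erase i, π' j s (a j)| * |adv T (r i) π p s a|
              + |∏ j ∈ Finset.univ.erase i, π' j s (a j)|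
                * |adv T (r i) π p s a - adv T (r i) π' p' s a| := by
              refine (abs_add_le _ _).trans ?_
              rw [abs_mul, abs_mul]
          _ ≤ (↑n * d) * Madv + 1 * (Cadv * d) := by
              refine add_le_add ?_ ?_
              · exact mul_le_mul hprodd (hadvb a) (abs_nonneg _)
                  (mul_nonneg (Nat.cast_nonneg _) hd0)
              · exact mul_le_mul hprod1 (hΔadv a) (abs_nonneg _) zero_le_one
          _ = (↑n * Madv + Cadv) * d := by ring
      · simp only [h, if_false, sub_zero, abs_zero]
        exact mul_nonneg (add_nonneg (mul_nonneg (Nat.cast_nonneg _) hMadv0) hCadv0) hd0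
    calc |∑ a : ∀ j, A j, ((if a i = ai
          then (∏ j ∈ Finset.univ.erase i, π j s (a j)) * adv T (r i) π p s a else 0)
          - (if a i = ai then (∏ j ∈ Finset.univ.erase i, π' j s (a j)) * adv T (r i) π' p' s a
            else 0))|
        ≤ ∑ a : ∀ j, A j, |(if a i = ai
          then (∏ j ∈ Finset.univ.erase i, π j s (a j)) * adv T (r i) π p s a else 0)
          - (if a i = ai then (∏ j ∈ Finset.univ.erase i, π' j s (a j)) * adv T (r i) π' p' s a
            else 0)| := Finset.abs_sum_le_sum_abs _ _
      _ ≤ ∑ _a : ∀ j, A j, (↑n * Madv + Cadv) * d :=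
          Finset.sum_le_sum fun a _ => hterm a
      _ = Cavg * d := by
          rw [Finset.sum_const, nsmul_eq_mul, Finset.card_univ, hCavg_def, hcA_def]
          ring
  -- final assembly
  have hps : |p s - p' s| ≤ K * β * d := by
    have h := abs_apply_le_l1 (p - p') s
    rw [Pi.sub_apply] at h
    refine h.trans ?_
    rw [l1_sub_comm]
    exact hst
  have hp's1 : |p' s| ≤ 1 := by
    rw [abs_of_nonneg (hp'.1 s)]
    rw [← hp'.2]
    exact Finset.single_le_sum (fun u _ => hp'.1 u) (Finset.mem_univ s)
  have e : p s * avgAdv T (r i) π p i s ai - p' s * avgAdv T (r i) π' p' i s ai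
      = (p s - p' s) * avgAdv T (r i) π p i s ai
        + p' s * (avgAdv T (r i) π p i s ai - avgAdv T (r i) π' p' i s ai) := by
    ring
  rw [e]
  calc |(p s - p' s) * avgAdv T (r i) π p i s ai
        + p' s * (avgAdv T (r i) π p i s ai - avgAdv T (r i) π' p' i s ai)|
      ≤ |p s - p' s| * |avgAdv T (r i) π p i s ai|
        + |p' s| * |avgAdv T (r i) π p i s ai - avgAdv T (r i) π' p' i s ai| := by
        refine (abs_add_le _ _).trans ?_
        rw [abs_mul, abs_mul]
    _ ≤ (K * β * d) * (cA * Madv) + 1 * (Cavg * d) := by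
        refine add_le_add ?_ ?_
        · exact mul_le_mul hps havgb (abs_nonneg _)
            (mul_nonneg (mul_nonneg hK0 hβ0.le) hd0)
        · exact mul_le_mul hp's1 hΔavg (abs_nonneg _) zero_le_one
    _ ≤ (K * β * cA * Madv + Cavg + 1) * d := by nlinarith


end
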